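/- If a fair division instance admits a randomized allocation that is ex-ante EQ and whose support consists only of EQ1 allocations, then for every agent i there exists an EQ1 allocation A such that v_i(A_i) >= (1/(n-1)) * sum over j != i of v_j(A_j) (equivalently, n * v_i(A_i) >= sum over all j of v_j(A_j)). -/
import Mathlib


open Finset

/-- An allocation is a partition of the goods among the agents. -/
def isPartition {ι γ : Type*} [Fintype ι] [Fintype γ] [DecidableEq γ]
    (A : ι → Finset γ) : Prop :=
  (∀ i j, i ≠ j → Disjoint (A i) (A j)) ∧ Finset.univ.biUnion A = Finset.univ

/-- Additive value of a bundle. -/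
def bundleVal {γ : Type*} (v : γ → ℚ) (S : Finset γ) : ℚ := ∑ g ∈ S, v g

/-- EQ1: for every pair of agents `i, j` with `A i` nonempty, some good can be
removed from `A i` so that `i`'s value drops to at most `j`'s value. -/
def EQ1 {ι γ : Type*} [DecidableEq γ] (v : ι → γ → ℚ) (A : ι → Finset γ) : Prop :=
  ∀ i j, A i ≠ ∅ → ∃ g ∈ A i, bundleVal (v i) ((A i).erase g) ≤ bundleVal (v j) (A j)

/-- if an instance admits an ex-ante EQ randomized allocation
supported on EQ1 allocations, then for every agent `i` there is an EQ1
allocation `A` with `n * v_i(A_i) ≥ ∑_j v_j(A_j)`. -/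
theorem stmt3 (n m : ℕ) (v : Fin n → Fin m → ℚ)
    (h : ∃ p : (Fin n → Finset (Fin m)) → ℚ,
          (∀ A, 0 ≤ p A) ∧
          (∑ A : Fin n → Finset (Fin m), p A) = 1 ∧
          (∀ A, p A ≠ 0 → isPartition A ∧ EQ1 v A) ∧
          (∀ i j : Fin n,
            (∑ A : Fin n → Finset (Fin m), p A * bundleVal (v i) (A i)) =
            (∑ A : Fin n → Finset (Fin m), p A * bundleVal (v j) (A j)))) :
    ∀ i : Fin n, ∃ A : Fin n → Finset (Fin m),
      isPartition A ∧ EQ1 v A ∧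
      (n : ℚ) * bundleVal (v i) (A i) ≥ ∑ j : Fin n, bundleVal (v j) (A j) := by
  obtain ⟨p, hp0, hp1, hsupp, heq⟩ := h
  intro i
  by_contra hcon
  push_neg at hcon
  -- For every A in the support, the inequality fails strictly.
  have hkey : ∀ A, p A ≠ 0 →
      (n : ℚ) * bundleVal (v i) (A i) < ∑ j : Fin n, bundleVal (v j) (A j) := by
    intro A hA
    obtain ⟨hpart, heq1⟩ := hsupp A hA
    have := hcon A hpart heq1
    linarith
  -- The sum S = ∑_A p A * (∑_j v_j(A_j) - n * v_i(A_i)) equals 0.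
  have hS : (∑ A : Fin n → Finset (Fin m),
      p A * ((∑ j : Fin n, bundleVal (v j) (A j)) - (n : ℚ) * bundleVal (v i) (A i))) = 0 := by
    have h1 : (∑ A : Fin n → Finset (Fin m),
        p A * (∑ j : Fin n, bundleVal (v j) (A j))) =
        (n : ℚ) * ∑ A : Fin n → Finset (Fin m), p A * bundleVal (v i) (A i) := by
      have : (∑ A : Fin n → Finset (Fin m),
          p A * (∑ j : Fin n, bundleVal (v j) (A j))) =
          ∑ j : Fin n, ∑ A : Fin n → Finset (Fin m), p A * bundleVal (v j) (A j) := by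
        rw [Finset.sum_comm]
        simp [Finset.mul_sum]
      rw [this]
      have : ∀ j : Fin n, (∑ A : Fin n → Finset (Fin m), p A * bundleVal (v j) (A j)) =
          (∑ A : Fin n → Finset (Fin m), p A * bundleVal (v i) (A i)) := fun j => heq j i
      rw [Finset.sum_congr rfl (fun j _ => this j)]
      simp [Finset.sum_const, nsmul_eq_mul]
    simp only [mul_sub]
    rw [Finset.sum_sub_distrib, h1, sub_eq_zero, Finset.mul_sum]
    exact Finset.sum_congr rfl fun A _ => by ring
  -- But S > 0.
  have hpos : 0 < (∑ A : Fin n → Finset (Fin m),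
      p A * ((∑ j : Fin n, bundleVal (v j) (A j)) - (n : ℚ) * bundleVal (v i) (A i))) := by
    obtain ⟨A₀, hA₀⟩ : ∃ A : Fin n → Finset (Fin m), p A ≠ 0 := by
      by_contra hc
      push_neg at hc
      simp [hc] at hp1
    apply Finset.sum_pos'
    · intro A _
      rcases eq_or_ne (p A) 0 with hA | hA
      · simp [hA]
      · have h1 := hkey A hA
        have h2 := (hp0 A).lt_of_ne (Ne.symm hA)
        have := mul_pos h2 (by linarith : (0:ℚ) < (∑ j : Fin n, bundleVal (v j) (A j)) - (n : ℚ) * bundleVal (v i) (A i))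
        linarith
    · refine ⟨A₀, Finset.mem_univ A₀, ?_⟩
      have h1 := hkey A₀ hA₀
      have h2 := (hp0 A₀).lt_of_ne (Ne.symm hA₀)
      exact mul_pos h2 (by linarith)
  linarith
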